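/- For any non-equilateral triangle with vertices A = (0,a), B = (−b,0), C = (c,0), a,b,c > 0, the Fermat point T = (u/d, v/d) (with u, v, d as given) satisfies OT > 2·NT, where O = ((c−b)/2, (a²−bc)/(2a)) is the circumcenter and N = ((c−b)/4, (a²+bc)/(4a)) is the nine-point center. Hence T lies strictly inside the orthocentroidal circle. -/

import Mathlib

set_option maxHeartbeats 1000000

theorem stmt11_aux (a b c s : ℝ) (ha : 0 < a) (hb : 0 < b) (hc : 0 < c)
    (hs3 : s ^ 2 = 3) (hs0 : 0 < s) (hne : ¬(b = c ∧ a = s * b)) :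
    Real.sqrt (((s * b * c - s * a ^ 2 - a * c - a * b) * (b - c)
        / (2 * s * (a ^ 2 + b ^ 2 + c ^ 2) + 6 * a * c + 6 * a * b + 2 * s * b * c)
        - (c - b) / 2) ^ 2
      + ((a ^ 2 + s * a * b + s * a * c + 3 * b * c) * (b + c)
        / (2 * s * (a ^ 2 + b ^ 2 + c ^ 2) + 6 * a * c + 6 * a * b + 2 * s * b * c)
        - (a ^ 2 - b * c) / (2 * a)) ^ 2)
      > 2 * Real.sqrt (((s * b * c - s * a ^ 2 - a * c - a * b) * (b - c)
        / (2 * s * (a ^ 2 + b ^ 2 + c ^ 2) + 6 * a * c + 6 * a * b + 2 * s * b * c)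
        - (c - b) / 4) ^ 2
      + ((a ^ 2 + s * a * b + s * a * c + 3 * b * c) * (b + c)
        / (2 * s * (a ^ 2 + b ^ 2 + c ^ 2) + 6 * a * c + 6 * a * b + 2 * s * b * c)
        - (a ^ 2 + b * c) / (4 * a)) ^ 2) := by
  set D : ℝ := 2 * s * (a ^ 2 + b ^ 2 + c ^ 2) + 6 * a * c + 6 * a * b + 2 * s * b * c with hD
  set U : ℝ := (s * b * c - s * a ^ 2 - a * c - a * b) * (b - c) with hU
  set V : ℝ := (a ^ 2 + s * a * b + s * a * c + 3 * b * c) * (b + c) with hV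
  have hd : 0 < D := by rw [hD]; positivity
  have hd0 : D ≠ 0 := ne_of_gt hd
  have ha0 : a ≠ 0 := ne_of_gt ha
  set A1 : ℝ := (U / D - (c - b) / 2) ^ 2 + (V / D - (a ^ 2 - b * c) / (2 * a)) ^ 2 with hA1
  set A2 : ℝ := (U / D - (c - b) / 4) ^ 2 + (V / D - (a ^ 2 + b * c) / (4 * a)) ^ 2 with hA2
  have t1 : (U / D - (c - b) / 2) ^ 2 = (2 * U - (c - b) * D) ^ 2 / (4 * D ^ 2) := by
    rw [div_sub_div _ _ hd0 (two_ne_zero), div_pow]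
    congr 1 <;> ring
  have t2 : (V / D - (a ^ 2 - b * c) / (2 * a)) ^ 2
      = (2 * a * V - (a ^ 2 - b * c) * D) ^ 2 / (4 * a ^ 2 * D ^ 2) := by
    rw [div_sub_div _ _ hd0 (by positivity : (2:ℝ) * a ≠ 0), div_pow]
    congr 1 <;> ring
  have t3 : (U / D - (c - b) / 4) ^ 2 = (4 * U - (c - b) * D) ^ 2 / (16 * D ^ 2) := by
    rw [div_sub_div _ _ hd0 (by norm_num : (4:ℝ) ≠ 0), div_pow]
    congr 1 <;> ring
  have t4 : (V / D - (a ^ 2 + b * c) / (4 * a)) ^ 2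
      = (4 * a * V - (a ^ 2 + b * c) * D) ^ 2 / (16 * a ^ 2 * D ^ 2) := by
    rw [div_sub_div _ _ hd0 (by positivity : (4:ℝ) * a ≠ 0), div_pow]
    congr 1 <;> ring
  have comb : ∀ x1 y1 x2 y2 : ℝ,
      (x1 / (4 * D ^ 2) + y1 / (4 * a ^ 2 * D ^ 2))
        - 4 * (x2 / (16 * D ^ 2) + y2 / (16 * a ^ 2 * D ^ 2))
      = (4 * a ^ 2 * x1 + 4 * y1 - 4 * a ^ 2 * x2 - 4 * y2) / (16 * a ^ 2 * D ^ 2) := by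
    intro x1 y1 x2 y2
    have e1 : x1 / (4 * D ^ 2) = (4 * a ^ 2 * x1) / (16 * a ^ 2 * D ^ 2) := by
      rw [div_eq_div_iff (by positivity) (by positivity)]; ring
    have e2 : y1 / (4 * a ^ 2 * D ^ 2) = (4 * y1) / (16 * a ^ 2 * D ^ 2) := by
      rw [div_eq_div_iff (by positivity) (by positivity)]; ring
    have e3 : x2 / (16 * D ^ 2) = (a ^ 2 * x2) / (16 * a ^ 2 * D ^ 2) := by
      rw [div_eq_div_iff (by positivity) (by positivity)]; ring
    rw [e1, e2, e3, ← add_div, ← add_div, ← mul_div_assoc, ← sub_div]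
    congr 1
    ring
  have numid : 4 * a ^ 2 * (2 * U - (c - b) * D) ^ 2 + 4 * (2 * a * V - (a ^ 2 - b * c) * D) ^ 2
      - 4 * a ^ 2 * (4 * U - (c - b) * D) ^ 2 - 4 * (4 * a * V - (a ^ 2 + b * c) * D) ^ 2
      = 16 * a * D * ((b + c) * ((a ^ 2 - 3 * b * c) ^ 2 + a ^ 2 * (b - c) ^ 2)) := by
    rw [hU, hV, hD]
    linear_combination (144*a^2*b^2*c^4 + 288*a^2*b^3*c^3 + 144*a^2*b^4*c^2 + 16*a^4*c^4 + (-96)*a^4*b*c^3 + (-224)*a^4*b^2*c^2 + (-96)*a^4*b^3*c + 16*a^4*b^4 + 16*a^6*c^2 + 32*a^6*b*c + 16*a^6*b^2) * hs3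
  have key : A1 - 4 * A2
      = (16 * a * D * ((b + c) * ((a ^ 2 - 3 * b * c) ^ 2 + a ^ 2 * (b - c) ^ 2)))
        / (16 * a ^ 2 * D ^ 2) := by
    rw [hA1, hA2, t1, t2, t3, t4, comb, numid]
  have hG : 0 < (a ^ 2 - 3 * b * c) ^ 2 + a ^ 2 * (b - c) ^ 2 := by
    rcases eq_or_ne b c with hbc | hbc
    · have hab : a ≠ s * b := fun h => hne ⟨hbc, h⟩
      have h1 : a ^ 2 - 3 * b * c ≠ 0 := by
        intro heq
        have hfac : (a - s * b) * (a + s * b) = 0 := by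
          rw [← hbc] at heq
          linear_combination heq - b ^ 2 * hs3
        rcases mul_eq_zero.mp hfac with h | h
        · exact hab (by linarith [sub_eq_zero.mp h])
        · nlinarith
      have h1' : 0 < (a ^ 2 - 3 * b * c) ^ 2 :=
        lt_of_le_of_ne (sq_nonneg _) (Ne.symm (pow_ne_zero 2 h1))
      nlinarith [sq_nonneg (a * (b - c))]
    · have h2 : (0:ℝ) < (b - c) ^ 2 :=
        lt_of_le_of_ne (sq_nonneg _) (Ne.symm (pow_ne_zero 2 (sub_ne_zero.mpr hbc)))
      nlinarith [sq_nonneg (a ^ 2 - 3 * b * c), mul_pos (mul_pos ha ha) h2]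
  have hRpos : 0 < (16 * a * D * ((b + c) * ((a ^ 2 - 3 * b * c) ^ 2 + a ^ 2 * (b - c) ^ 2)))
      / (16 * a ^ 2 * D ^ 2) := by positivity
  have hlt : 4 * A2 < A1 := by rw [← key] at hRpos; linarith
  have hA2nonneg : 0 ≤ A2 := by rw [hA2]; positivity
  have h4 : Real.sqrt (4 * A2) = 2 * Real.sqrt A2 := by
    rw [show (4:ℝ) * A2 = 2 ^ 2 * A2 by ring, Real.sqrt_mul (by norm_num : (0:ℝ) ≤ 2 ^ 2),
      Real.sqrt_sq (by norm_num : (0:ℝ) ≤ 2)]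
  calc 2 * Real.sqrt A2 = Real.sqrt (4 * A2) := h4.symm
    _ < Real.sqrt A1 := Real.sqrt_lt_sqrt (by linarith) hlt


/-- For a non-equilateral triangle `A = (0,a)`, `B = (−b,0)`, `C = (c,0)` with
`a,b,c > 0`, the Fermat point `T = (u/d, v/d)` satisfies `OT > 2·NT`, where
`O = ((c−b)/2, (a²−bc)/(2a))` and `N = ((c−b)/4, (a²+bc)/(4a))`; hence `T`
lies strictly inside the orthocentroidal circle. -/
theorem stmt11 (a b c : ℝ) (ha : 0 < a) (hb : 0 < b) (hc : 0 < c)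
    (hne : ¬(b = c ∧ a = Real.sqrt 3 * b)) :
    let u := (Real.sqrt 3 * b * c - Real.sqrt 3 * a ^ 2 - a * c - a * b) * (b - c)
    let v := (a ^ 2 + Real.sqrt 3 * a * b + Real.sqrt 3 * a * c + 3 * b * c) * (b + c)
    let d := 2 * Real.sqrt 3 * (a ^ 2 + b ^ 2 + c ^ 2) + 6 * a * c + 6 * a * b
        + 2 * Real.sqrt 3 * b * c
    Real.sqrt ((u / d - (c - b) / 2) ^ 2 + (v / d - (a ^ 2 - b * c) / (2 * a)) ^ 2)
      > 2 * Real.sqrt ((u / d - (c - b) / 4) ^ 2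
          + (v / d - (a ^ 2 + b * c) / (4 * a)) ^ 2) := by
  intro u v d
  exact stmt11_aux a b c (Real.sqrt 3) ha hb hc (Real.sq_sqrt (by norm_num))
    (Real.sqrt_pos.mpr (by norm_num)) hne
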